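/- arXiv:2103.04707 — 3 statements merged into one kernel-verified Lean document; each statement's English description precedes it below -/
import Mathlib

section
/- Let S be a standard Young tableau of shape λ and let v be its column reading word. Then applying the RSK row insertion algorithm to v yields insertion tableau equal to S. -/
namespace RSKPaper

/-- The shape of a tableau: the list of row lengths (rows stored bottom-to-top,
French convention, so the shape is weakly decreasing). -/
def shape (T : List (List ℕ)) : List ℕ := T.map List.length

/-- The conjugate (transpose) of a partition given as a weakly decreasing list. -/
def conj (l : List ℕ) : List ℕ :=
  (List.range (l.headD 0)).map (fun j => l.countP (fun x => decide (j < x)))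

/-- A weakly decreasing list of positive integers. -/
def IsPartitionList (l : List ℕ) : Prop :=
  l.Pairwise (· ≥ ·) ∧ ∀ x ∈ l, 0 < x

/-- A standard Young tableau, rows stored bottom-to-top (French convention):
partition shape, rows strictly increasing, columns strictly increasing upwards,
and the entries are exactly 1,...,n. -/
def IsSYT (T : List (List ℕ)) : Prop :=
  IsPartitionList (shape T) ∧
  (∀ r ∈ T, r.Pairwise (· < ·)) ∧
  (∀ i j, i + 1 < T.length → j < (T.getD (i+1) []).length →
    (T.getD i []).getD j 0 < (T.getD (i+1) []).getD j 0) ∧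
  T.flatten.Perm (List.range' 1 T.flatten.length)

/-- Schensted row insertion of a single letter into a tableau. -/
def insertTab : List (List ℕ) → ℕ → List (List ℕ)
  | [], a => [[a]]
  | r :: rs, a =>
    match r.findIdx? (fun b => decide (a < b)) with
    | none => (r ++ [a]) :: rs
    | some i => (r.set i a) :: insertTab rs (r.getD i 0)

/-- The insertion tableau of a word. -/
def insertWord (w : List ℕ) : List (List ℕ) := w.foldl insertTab []

/-- The index of the row where the shape grew. -/
def growthRow (P P' : List (List ℕ)) : ℕ :=
  (List.range P'.length).findIdx
    (fun i => decide ((P.getD i []).length ≠ (P'.getD i []).length))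

/-- Add a box labelled `k` at the end of row `r` of the recording tableau. -/
def addBox (Q : List (List ℕ)) (r k : ℕ) : List (List ℕ) :=
  if r < Q.length then Q.set r (Q.getD r [] ++ [k]) else Q ++ [[k]]

def RSKaux : List ℕ → ℕ → List (List ℕ) × List (List ℕ) → List (List ℕ) × List (List ℕ)
  | [], _, pq => pq
  | a :: rest, k, (P, Q) =>
      let P' := insertTab P a
      RSKaux rest (k+1) (P', addBox Q (growthRow P P') k)

/-- The RSK correspondence: insertion and recording tableaux of a word. -/
def RSK (w : List ℕ) : List (List ℕ) × List (List ℕ) := RSKaux w 1 ([], [])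

/-- Row reading word: rows top to bottom, left to right. -/
def readingWord (T : List (List ℕ)) : List ℕ := T.reverse.flatten

/-- Column reading word: columns left to right, each read top to bottom. -/
def columnWord (T : List (List ℕ)) : List ℕ :=
  (List.range (T.headD []).length).flatMap
    (fun j => T.reverse.filterMap (fun row => row[j]?))

/-- Transpose of a tableau: column `j` (bottom to top) becomes row `j`. -/
def transposeTab (T : List (List ℕ)) : List (List ℕ) :=
  (List.range (T.headD []).length).map
    (fun j => T.filterMap (fun row => row[j]?))

/-- The inverse of a permutation written as a word on 1,...,n. -/
def invWord (w : List ℕ) : List ℕ :=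
  (List.range w.length).map (fun i => w.findIdx (fun x => decide (x = i+1)) + 1)

/-- Convert a list of columns (each bottom-to-top) into a list of `k` rows. -/
def rowsOfCols (cols : List (List ℕ)) (k : ℕ) : List (List ℕ) :=
  (List.range k).map (fun i => cols.filterMap (fun c => (c)[i]?))

/-- The columns of the tableau `T_λ`: process the rows of `λ` from shortest to
longest; at each stage drop the next consecutive integers into the bottommost
empty cells of the first `λ_{k-t+1}` columns, left to right. -/
def colsOfT (l : List ℕ) : List (List ℕ) :=
  (l.reverse.foldl
    (fun (st : List (List ℕ) × ℕ) len =>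
      (st.1.mapIdx (fun j col => if j < len then col ++ [st.2 + j] else col), st.2 + len))
    ((List.replicate (l.headD 0) ([] : List ℕ)), 1)).1

/-- The tableau `T_λ` of Lemma 3.3. -/
def Tlam (l : List ℕ) : List (List ℕ) := rowsOfCols (colsOfT l) l.length

/-- The tableau `Q_λ`: columns filled consecutively with `1,…,n` from bottom to
top, left column first. -/
def Qlam (l : List ℕ) : List (List ℕ) :=
  rowsOfCols
    ((List.range (conj l).length).map (fun j =>
      (List.range ((conj l).getD j 0)).map (fun i => ((conj l).take j).sum + i + 1)))
    l.length

/-- The map `f`: row reading word of the recording tableau. -/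
def f (w : List ℕ) : List ℕ := readingWord (RSK w).2

/-- The map `c`: column reading word of the recording tableau. -/
def c (w : List ℕ) : List ℕ := columnWord (RSK w).2

/-- The map `r`: reversed row reading word of the recording tableau. -/
def r (w : List ℕ) : List ℕ := (readingWord (RSK w).2).reverse

/-- `s` is `k`-increasing: it contains no decreasing subsequence of length `k+1`. -/
def IsKIncreasing (k : ℕ) (s : List ℕ) : Prop :=
  ∀ d : List ℕ, d.Sublist s → d.Pairwise (· > ·) → d.length ≤ k

/-- `s` is `k`-decreasing: it contains no increasing subsequence of length `k+1`. -/
def IsKDecreasing (k : ℕ) (s : List ℕ) : Prop :=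
  ∀ d : List ℕ, d.Sublist s → d.Pairwise (· < ·) → d.length ≤ k

/-- `I_k(w)`: the maximum length of a `k`-increasing subsequence of `w`. -/
noncomputable def Ik (k : ℕ) (w : List ℕ) : ℕ :=
  sSup {m | ∃ s : List ℕ, s.Sublist w ∧ IsKIncreasing k s ∧ s.length = m}

/-- `D_k(w)`: the maximum length of a `k`-decreasing subsequence of `w`. -/
noncomputable def Dk (k : ℕ) (w : List ℕ) : ℕ :=
  sSup {m | ∃ s : List ℕ, s.Sublist w ∧ IsKDecreasing k s ∧ s.length = m}

end RSKPaper

namespace RSKPaper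

lemma findIdx?_append_singleton (p : ℕ → Bool) (r : List ℕ) (b : ℕ)
    (h : ∀ x ∈ r, p x = false) (hb : p b = true) :
    (r ++ [b]).findIdx? p = some r.length := by
  induction r with
  | nil => simp [List.findIdx?, List.findIdx?.go, hb]
  | cons x r ih =>
    have hx := h x (by simp)
    simp [List.findIdx?_cons, hx, ih (fun y hy => h y (by simp [hy]))]

lemma cascade : ∀ (rs : List (List ℕ)) (cs : List ℕ) (tl : List (List ℕ)) (a : ℕ),
    rs.length = cs.length →
    (a :: cs).Pairwise (· < ·) →
    (∀ t, ∀ x ∈ rs.getD t [], x ≤ (a :: cs).getD t 0) →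
    insertTab (List.zipWith (fun r b => r ++ [b]) rs cs ++ tl) a
      = List.zipWith (fun r b => r ++ [b]) rs (a :: cs)
        ++ insertTab tl ((a :: cs).getLast (by simp)) := by
  intro rs
  induction rs with
  | nil =>
    intro cs tl a hlen _ _
    have : cs = [] := List.eq_nil_of_length_eq_zero hlen.symm
    subst this
    simp
  | cons r rs ih =>
    intro cs tl a hlen hsort hent
    match cs with
    | [] => simp at hlen
    | b :: cs' =>
      have hab : a < b := (List.pairwise_cons.mp hsort).1 b (by simp)
      have hfi : (r ++ [b]).findIdx? (fun x => decide (a < x)) = some r.length := by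
        apply findIdx?_append_singleton
        · intro x hx
          have := hent 0 x (by simpa using hx)
          simp at this ⊢
          omega
        · simp [hab]
      have hset : (r ++ [b]).set r.length a = r ++ [a] := by
        rw [List.set_append_right _ _ (le_refl _)]
        simp
      have hgd : (r ++ [b]).getD r.length 0 = b := by
        simp [List.getD_eq_getElem?_getD]
      have hrec := ih cs' tl b (by simpa using hlen) hsort.of_cons
        (fun t x hx => by
          have := hent (t+1) x (by simpa using hx)
          simpa using this)
      simp only [List.zipWith_cons_cons, List.cons_append, insertTab, hfi, hset, hgd, List.append_eq, hrec]
      rw [show ((a :: b :: cs').getLast (by simp)) = ((b :: cs').getLast (by simp)) from List.getLast_cons (by simp)]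

/-- Append `c` as a new rightmost column: row `t` gets `c[t]` appended; if `c` is
taller than `T`, new singleton rows are created. -/
def attachCol (T : List (List ℕ)) (c : List ℕ) : List (List ℕ) :=
  List.zipWith (fun r b => r ++ [b]) (T ++ List.replicate (c.length - T.length) []) c
    ++ T.drop c.length

lemma zipWith_take_left {α β γ : Type*} (f : α → β → γ) :
    ∀ (l : List α) (c : List β), List.zipWith f l c = List.zipWith f (l.take c.length) c := by
  intro l
  induction l with
  | nil => intro c; simp
  | cons x l ih =>
    intro c
    cases c with
    | nil => simp
    | cons b c => simp [ih c]

lemma zipWith_take_right {α β γ : Type*} (f : α → β → γ) :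
    ∀ (l : List α) (c : List β), List.zipWith f l c = List.zipWith f l (c.take l.length) := by
  intro l
  induction l with
  | nil => intro c; simp
  | cons x l ih =>
    intro c
    cases c with
    | nil => simp
    | cons b c => simp [ih c]

lemma insertCol : ∀ (c : List ℕ) (T : List (List ℕ)),
    c.Pairwise (· < ·) →
    (∀ t, t < c.length → ∀ x ∈ T.getD t [], x < c.getD t 0) →
    List.foldl insertTab T c.reverse = attachCol T c := by
  intro c
  induction c with
  | nil => intro T _ _; simp [attachCol]
  | cons a c' ih =>
    intro T hsort hent
    have hrev : (a :: c').reverse = c'.reverse ++ [a] := by simp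
    rw [hrev, List.foldl_append]
    have hIH : List.foldl insertTab T c'.reverse = attachCol T c' := by
      apply ih T hsort.of_cons
      intro t ht x hx
      have h2 : (a :: c').getD t 0 < (a :: c').getD (t+1) 0 := by
        have ht1 : t + 1 < (a :: c').length := by simpa using Nat.succ_lt_succ ht
        rw [List.getD_eq_getElem _ _ (by omega), List.getD_eq_getElem _ _ ht1]
        exact List.pairwise_iff_getElem.mp hsort t (t+1) (by omega) ht1 (by omega)
      have := hent t (by simp; omega) x hx
      simpa using this.trans h2
    rw [hIH, List.foldl_cons, List.foldl_nil]
    -- main step: one more cascading insertion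
    have hlenp : (T ++ List.replicate (c'.length - T.length) ([]:List ℕ)).length
        = max T.length c'.length := by
      simp; omega
    set rs := (T ++ List.replicate (c'.length - T.length) ([]:List ℕ)).take c'.length with hrs
    have hrslen : rs.length = c'.length := by
      rw [hrs, List.length_take, hlenp]; omega
    have hzip : List.zipWith (fun r b => r ++ [b]) (T ++ List.replicate (c'.length - T.length) []) c'
        = List.zipWith (fun r b => r ++ [b]) rs c' := by
      rw [hrs]; exact zipWith_take_left _ _ _
    have hmem : ∀ t, ∀ x ∈ rs.getD t [], x ∈ T.getD t [] ∧ t < c'.length := by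
      intro t x hx
      by_cases ht : t < c'.length
      · by_cases htT : t < T.length
        · have h2 : rs.getD t [] = T.getD t [] := by
            rw [hrs, List.getD_eq_getElem?_getD, List.getElem?_take_of_lt ht,
              List.getElem?_append_left htT, ← List.getD_eq_getElem?_getD]
          rw [h2] at hx
          exact ⟨hx, ht⟩
        · exfalso
          have h2 : rs.getD t [] = [] := by
            rw [hrs, List.getD_eq_getElem?_getD, List.getElem?_take_of_lt ht,
              List.getElem?_append_right (by omega)]
            rcases h3 : (List.replicate (c'.length - T.length) ([]:List ℕ))[t - T.length]? with _ | v
            · simp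
            · have := List.mem_of_getElem? h3
              simp at this
              simp [this]
          rw [h2] at hx
          simp at hx
      · rw [List.getD_eq_default _ _ (by omega)] at hx
        simp at hx
    have hentries : ∀ t, ∀ x ∈ rs.getD t [], x ≤ (a :: c').getD t 0 := by
      intro t x hx
      obtain ⟨hxT, ht⟩ := hmem t x hx
      exact le_of_lt (hent t (by simp; omega) x hxT)
    have hcas := cascade rs c' (T.drop c'.length) a hrslen hsort hentries
    have hw : ((a :: c').getLast (by simp)) = (a :: c').getD c'.length 0 := by
      rw [List.getLast_eq_getElem, List.getD_eq_getElem _ _ (by simp)]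
      simp
    have hsplitc : a :: c' = (a :: c').take c'.length ++ [(a :: c').getLast (by simp)] := by
      conv_lhs => rw [← List.take_length (l := a :: c')]
      rw [show (a :: c').length = c'.length + 1 from by simp, List.take_succ,
        List.getLast_eq_getElem]
      simp
    conv_lhs => rw [attachCol, hzip]
    rw [hcas]
    by_cases hc : c'.length < T.length
    · -- the bumped value is appended to row c'.length of T
      have hrep0 : c'.length - T.length = 0 := by omega
      have hdrop : T.drop c'.length = T[c'.length]'hc :: T.drop (c'.length + 1) :=
        List.drop_eq_getElem_cons hc
      have hnone : (T[c'.length]'hc).findIdx?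
          (fun x => decide ((a :: c').getLast (by simp) < x)) = none := by
        rw [List.findIdx?_eq_none_iff]
        intro x hx
        have : x < (a :: c').getD c'.length 0 := by
          apply hent c'.length (by simp)
          rwa [List.getD_eq_getElem _ _ hc]
        rw [hw]
        simp only [decide_eq_false_iff_not]
        omega
      have hins : insertTab (T.drop c'.length) ((a :: c').getLast (by simp))
          = (T[c'.length]'hc ++ [(a :: c').getLast (by simp)]) :: T.drop (c'.length + 1) := by
        rw [hdrop]
        simp [insertTab, hnone]
      rw [hins, attachCol]
      have htake : T ++ List.replicate ((a :: c').length - T.length) ([]:List ℕ) = T := by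
        simp only [List.length_cons]
        rw [show c'.length + 1 - T.length = 0 from by omega]
        simp
      rw [htake]
      have hl : (List.take c'.length T).length = c'.length := by
        rw [List.length_take]; omega
      have hzip2 : List.zipWith (fun r b => r ++ [b]) T (a :: c')
          = List.zipWith (fun r b => r ++ [b]) rs (a :: c')
            ++ [T[c'.length]'hc ++ [(a :: c').getLast (by simp)]] := by
      
        rw [zipWith_take_left _ T (a :: c'), show (a :: c').length = c'.length + 1 from by simp]
        rw [List.take_succ]
        conv_lhs => rw [hsplitc]
        rw [List.zipWith_append (by rw [hl, List.length_take]; simp)]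
        congr 1
        · rw [hrs, hrep0]
          simp only [List.replicate_zero, List.append_nil]
          conv_rhs => rw [zipWith_take_right _ (List.take c'.length T) (a :: c'), hl]
        · rw [List.getLast_eq_getElem]
          simp [List.getElem?_eq_getElem hc]
      rw [hzip2]
      simp
    · -- a new row is created
      have hTle : T.length ≤ c'.length := by omega
      have hdrop : T.drop c'.length = [] := List.drop_eq_nil_of_le hTle
      have hdrop1 : T.drop (c'.length + 1) = [] := List.drop_eq_nil_of_le (by omega)
      rw [hdrop, attachCol]
      simp only [List.length_cons]
      rw [hdrop1]
      have hpad : T ++ List.replicate (c'.length + 1 - T.length) ([]:List ℕ)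
          = (T ++ List.replicate (c'.length - T.length) ([]:List ℕ)) ++ [[]] := by
        rw [show c'.length + 1 - T.length = (c'.length - T.length) + 1 from by omega]
        rw [List.replicate_succ']
        simp
      rw [hpad]
      have hrs2 : rs = T ++ List.replicate (c'.length - T.length) ([]:List ℕ) := by
        rw [hrs]
        apply List.take_of_length_le
        rw [hlenp]; omega
      conv_rhs => rw [hsplitc]
      rw [List.zipWith_append (by rw [← hrs2, hrslen, List.length_take]; simp)]
      rw [← hrs2]
      have h5 : List.zipWith (fun r b => r ++ [b]) rs ((a :: c').take c'.length)
          = List.zipWith (fun r b => r ++ [b]) rs (a :: c') := by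
        conv_rhs => rw [zipWith_take_right _ rs (a :: c'), hrslen]
      rw [h5]
      simp [insertTab]

lemma colExtract (j : ℕ) : ∀ (L : List (List ℕ)),
    L.Pairwise (fun r s => s.length ≤ r.length) →
    (L.filterMap (fun row => row[j]?)).length ≤ L.length ∧
    (∀ t (ht : t < (L.filterMap (fun row => row[j]?)).length),
       ∃ hL : t < L.length, j < (L[t]'hL).length ∧
         (L.filterMap (fun row => row[j]?))[t]'ht = (L[t]'hL).getD j 0) ∧
    (∀ t (hL : t < L.length), (L.filterMap (fun row => row[j]?)).length ≤ t →
       (L[t]'hL).length ≤ j) := by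
  intro L
  induction L with
  | nil => intro _; refine ⟨by simp, by simp, by simp⟩
  | cons r L ih =>
    intro hp
    have hp1 : ∀ s ∈ L, s.length ≤ r.length := (List.pairwise_cons.mp hp).1
    have hp2 : L.Pairwise (fun r s => s.length ≤ r.length) := (List.pairwise_cons.mp hp).2
    obtain ⟨ha, hb, hc⟩ := ih hp2
    by_cases hj : j < r.length
    · have hr : r[j]? = some (r.getD j 0) := by
        rw [List.getElem?_eq_getElem hj, List.getD_eq_getElem _ _ hj]
      have hfm : (r :: L).filterMap (fun row => row[j]?)
          = r.getD j 0 :: L.filterMap (fun row => row[j]?) := by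
        rw [List.filterMap_cons, hr]
      rw [hfm]
      refine ⟨by simpa using ha, ?_, ?_⟩
      · intro t ht
        match t with
        | 0 => exact ⟨by simp, by simpa using hj, by simp⟩
        | t+1 =>
          obtain ⟨hL, h1, h2⟩ := hb t (by simpa using ht)
          exact ⟨by simpa using hL, by simpa using h1, by simpa using h2⟩
      · intro t hL hlen
        match t with
        | 0 => simp at hlen
        | t+1 =>
          have := hc t (by simpa using hL) (by simpa using hlen)
          simpa using this
    · have hr : r[j]? = none := by
        rw [List.getElem?_eq_none (by omega)]
      have hfm : (r :: L).filterMap (fun row => row[j]?) = [] := by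
        rw [List.filterMap_cons, hr, List.filterMap_eq_nil_iff]
        intro s hs
        rw [List.getElem?_eq_none (by have := hp1 s hs; omega)]
      rw [hfm]
      refine ⟨by simp, by simp, ?_⟩
      intro t hL _
      match t with
      | 0 => simpa using by omega
      | t+1 =>
        have hmem : (r :: L)[t+1]'hL ∈ L := by
          rw [List.getElem_cons_succ]
          exact List.getElem_mem _
        have := hp1 _ hmem
        omega

lemma flatMap_congr {α β : Type*} {l : List α} {f g : α → List β}
    (h : ∀ a ∈ l, f a = g a) : l.flatMap f = l.flatMap g := by
  induction l with
  | nil => simp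
  | cons a l ih =>
    simp only [List.flatMap_cons]
    rw [h a (by simp), ih (fun a ha => h a (by simp [ha]))]

lemma zip_replicate_singleton : ∀ (c : List ℕ),
    List.zipWith (fun r b => r ++ [b]) (List.replicate c.length ([]:List ℕ)) c
      = c.map (fun b => [b]) := by
  intro c
  induction c with
  | nil => simp
  | cons b c ih => simpa [List.replicate_succ] using ih

lemma reconstruct (m : ℕ) : ∀ (T : List (List ℕ)),
    (shape T).Pairwise (· ≥ ·) →
    (∀ r ∈ T, r ≠ []) →
    (∀ r ∈ T, r.Pairwise (· < ·)) →
    (∀ i j, i + 1 < T.length → j < (T.getD (i+1) []).length →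
      (T.getD i []).getD j 0 < (T.getD (i+1) []).getD j 0) →
    (T.headD []).length = m →
    insertWord (columnWord T) = T := by
  induction m using Nat.strong_induction_on with
  | _ m ih =>
  intro T hshape hne hrows hcol hwidth
  rcases T with _ | ⟨r, L⟩
  · simp [columnWord, insertWord]
  set T : List (List ℕ) := r :: L with hT
  have hTne : T ≠ [] := by simp [hT]
  have h0 : 0 < T.length := by simp [hT]
  have hhead : T.headD [] = T[0]'h0 := by simp [hT]
  have hwidth0 : (T[0]'h0).length = m := by rw [← hhead]; exact hwidth
  have hpairlen : T.Pairwise (fun r s => s.length ≤ r.length) := by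
    have h : List.Pairwise (· ≥ ·) (List.map List.length T) := hshape
    exact List.pairwise_map.mp h
  have hlenle : ∀ t (ht : t < T.length), (T[t]'ht).length ≤ m := by
    intro t ht
    rcases Nat.eq_zero_or_pos t with h | h
    · subst h; omega
    · have := List.pairwise_iff_getElem.mp hpairlen 0 t h0 ht h
      omega
  rcases m with _ | m
  · -- width 0 : impossible since rows nonempty
    exfalso
    have : T[0]'h0 ∈ T := List.getElem_mem _
    have := hne _ this
    rw [← List.length_pos_iff] at this
    omega
  rcases m with _ | m
  · -- width 1
    set c := T.filterMap (fun row => row[0]?) with hc0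
    obtain ⟨ha, hb, hcc⟩ := colExtract 0 T hpairlen
    rw [← hc0] at ha hb hcc
    have hclen : c.length = T.length := by
      rcases Nat.lt_or_ge c.length T.length with h | h
      · exfalso
        have h1 := hcc c.length h (le_refl _)
        have h2 : T[c.length]'h ∈ T := List.getElem_mem _
        have := hne _ h2
        rw [← List.length_pos_iff] at this
        omega
      · omega
    have hcw : columnWord T = c.reverse := by
      unfold columnWord
      rw [hwidth]
      simp only [List.range_succ, List.range_zero, List.nil_append, List.flatMap_cons,
        List.flatMap_nil, List.append_nil, hc0, List.filterMap_reverse]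
    have hsorted : c.Pairwise (· < ·) := by
      apply List.isChain_iff_pairwise.mp
      rw [List.isChain_iff_getElem]
      intro i hi
      obtain ⟨hL1, hj1, he1⟩ := hb i (by omega)
      obtain ⟨hL2, hj2, he2⟩ := hb (i+1) (by omega)
      rw [he1, he2]
      have := hcol i 0 (by omega) (by rw [List.getD_eq_getElem _ _ hL2]; omega)
      rwa [List.getD_eq_getElem T _ hL1, List.getD_eq_getElem T _ hL2] at this
    have hstep := insertCol c [] hsorted (by intro t ht x hx; simp at hx)
    rw [hcw, insertWord, hstep]
    rw [attachCol]
    simp only [List.length_nil, Nat.sub_zero, List.nil_append, List.drop_nil, List.append_nil]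
    rw [zip_replicate_singleton]
    apply List.ext_getElem (by simp [hclen])
    intro t h1 h2
    simp only [List.getElem_map]
    obtain ⟨hL, hj, he⟩ := hb t (by simpa using h1)
    have hle : (T[t]'hL).length ≤ 1 := hlenle t hL
    have hge : 0 < (T[t]'hL).length := by
      have := hne _ (List.getElem_mem hL)
      rwa [← List.length_pos_iff] at this
    obtain ⟨a, hA⟩ := List.length_eq_one_iff.mp (by omega : (T[t]'hL).length = 1)
    have : T[t]'h2 = [a] := hA
    rw [this, he]
    have : T[t]'hL = [a] := hA
    rw [this]
    simp
  · -- width m+2, inductive case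
    set T' := T.map (List.take (m+1)) with hT'
    set c := T.filterMap (fun row => row[m+1]?) with hc0
    obtain ⟨ha, hb, hcc⟩ := colExtract (m+1) T hpairlen
    rw [← hc0] at ha hb hcc
    have hT'len : T'.length = T.length := by simp [hT']
    have hT'get : ∀ t (ht : t < T.length),
        T'[t]'(by rw [hT'len]; exact ht) = (T[t]'ht).take (m+1) := by
      intro t ht
      simp [hT']
    have hT'head : (T'.headD []).length = m + 1 := by
      have hr : r.length = m + 1 + 1 := by simpa [hT] using hwidth0
      rw [hT', hT]
      simp [List.length_take]
      omega
    have hcw : columnWord T = columnWord T' ++ c.reverse := by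
      unfold columnWord
      rw [hwidth, hT'head, List.range_succ, List.flatMap_append]
      congr 1
      · apply flatMap_congr
        intro j hj
        rw [List.mem_range] at hj
        rw [hT', ← List.map_reverse, List.filterMap_map]
        congr 1
        funext row
        simp only [Function.comp]
        rw [List.getElem?_take_of_lt hj]
      · simp only [List.flatMap_cons, List.flatMap_nil, List.append_nil, hc0,
          List.filterMap_reverse]
    have hIH : insertWord (columnWord T') = T' := by
      apply ih (m+1) (by omega) T'
      · -- sorted shape
        have hs' : List.Pairwise (fun a b : List ℕ => b.length ≤ a.length) T' := by
          rw [hT', List.pairwise_map]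
          apply List.Pairwise.imp _ hpairlen
          intro a b hab
          simp only [List.length_take]
          omega
        exact List.pairwise_map.mpr hs'
      · intro s hs
        rw [hT', List.mem_map] at hs
        obtain ⟨row, hrow, rfl⟩ := hs
        rw [Ne, List.take_eq_nil_iff]
        push_neg
        exact ⟨by omega, hne row hrow⟩
      · intro s hs
        rw [hT', List.mem_map] at hs
        obtain ⟨row, hrow, rfl⟩ := hs
        exact (hrows row hrow).take
      · intro i j0 hi hj0
        have hi' : i + 1 < T.length := by rwa [hT'len] at hi
        have hi0 : i < T.length := by omega
        have e1 : T'.getD (i+1) [] = (T[i+1]'hi').take (m+1) := by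
          rw [List.getD_eq_getElem _ _ hi]
          exact hT'get (i+1) hi'
        have e0 : T'.getD i [] = (T[i]'hi0).take (m+1) := by
          rw [List.getD_eq_getElem _ _ (by omega : i < T'.length)]
          exact hT'get i hi0
        rw [e1, List.length_take] at hj0
        have hj1 : j0 < m + 1 := by omega
        have etake : ∀ (l : List ℕ), (l.take (m+1)).getD j0 0 = l.getD j0 0 := by
          intro l
          rw [List.getD_eq_getElem?_getD, List.getElem?_take_of_lt hj1,
            ← List.getD_eq_getElem?_getD]
        rw [e0, e1, etake, etake]
        have := hcol i j0 hi' (by rw [List.getD_eq_getElem _ _ hi']; omega)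
        rwa [List.getD_eq_getElem T _ hi0, List.getD_eq_getElem T _ hi'] at this
      · exact hT'head
    rw [hcw]
    unfold insertWord
    rw [List.foldl_append]
    rw [show List.foldl insertTab [] (columnWord T') = T' from hIH]
    have hsorted : c.Pairwise (· < ·) := by
      apply List.isChain_iff_pairwise.mp
      rw [List.isChain_iff_getElem]
      intro i hi
      obtain ⟨hL1, hj1, he1⟩ := hb i (by omega)
      obtain ⟨hL2, hj2, he2⟩ := hb (i+1) (by omega)
      rw [he1, he2]
      have := hcol i (m+1) (by omega) (by rw [List.getD_eq_getElem _ _ hL2]; omega)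
      rwa [List.getD_eq_getElem T _ hL1, List.getD_eq_getElem T _ hL2] at this
    have hentries : ∀ t, t < c.length → ∀ x ∈ T'.getD t [], x < c.getD t 0 := by
      intro t ht x hx
      obtain ⟨hL, hj, he⟩ := hb t ht
      have hgd : T'.getD t [] = (T[t]'hL).take (m+1) := by
        rw [List.getD_eq_getElem _ _ (by rw [hT'len]; exact hL)]
        exact hT'get t hL
      rw [hgd] at hx
      obtain ⟨i, hi, hxi⟩ := List.mem_iff_getElem.mp hx
      have hi' : i < (T[t]'hL).length := by rw [List.length_take] at hi; omega
      have hilt : i < m + 1 := by rw [List.length_take] at hi; omega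
      have hival : ((T[t]'hL).take (m+1))[i]'hi = (T[t]'hL)[i]'hi' :=
        List.getElem_take
      have hsrow := hrows _ (List.getElem_mem hL)
      have hlt := List.pairwise_iff_getElem.mp hsrow i (m+1) hi' hj hilt
      rw [List.getD_eq_getElem _ _ ht, he, List.getD_eq_getElem _ _ hj]
      rw [← hxi, hival]
      exact hlt
    rw [insertCol c T' hsorted hentries]
    rw [attachCol]
    have hrep : c.length - T'.length = 0 := by rw [hT'len]; omega
    rw [hrep]
    simp only [List.replicate_zero, List.append_nil]
    have hz : List.zipWith (fun r b => r ++ [b]) T' c = T.take c.length := by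
      apply List.ext_getElem
      · rw [List.length_zipWith, List.length_take, hT'len]
        omega
      · intro t h1 h2
        rw [List.getElem_zipWith]
        have ht : t < c.length := by rw [List.length_zipWith] at h1; omega
        obtain ⟨hL, hj, he⟩ := hb t ht
        rw [List.getElem_take]
        rw [hT'get t hL, he, List.getD_eq_getElem _ _ hj]
        have hts : (T[t]'hL).take (m+1) ++ [(T[t]'hL)[m+1]'hj] = (T[t]'hL).take (m+2) := by
          conv_rhs => rw [List.take_succ]
          rw [List.getElem?_eq_getElem hj]
          simp
        rw [hts]
        exact List.take_of_length_le (hlenle t hL)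
    have hd : T'.drop c.length = T.drop c.length := by
      apply List.ext_getElem
      · simp [hT'len]
      · intro i h1 h2
        rw [List.getElem_drop, List.getElem_drop]
        have hL : c.length + i < T.length := by rw [List.length_drop] at h2; omega
        rw [hT'get (c.length + i) hL]
        exact List.take_of_length_le (hcc (c.length + i) hL (by omega))
    rw [hz, hd, List.take_append_drop]

end RSKPaper

open RSKPaper in
/-- Row-inserting the column reading word of a standard Young tableau `S`
reproduces `S` as the insertion tableau. -/
theorem insert_columnWord (S : List (List ℕ)) (lam : List ℕ)
    (hS : IsSYT S) (hshape : shape S = lam) :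
    insertWord (columnWord S) = S := by
  obtain ⟨⟨hsort, hpos⟩, hrows, hcol, _⟩ := hS
  apply reconstruct ((S.headD []).length) S hsort ?_ hrows hcol rfl
  intro r hr
  have : r.length ∈ shape S := by
    rw [shape]
    exact List.mem_map_of_mem hr
  have := hpos _ this
  rw [← List.length_pos_iff]
  omega
end

section
/- Let T be a standard Young tableau of shape λ with row reading word w, and let w' be the reversal of w. Then the insertion tableau of RSK applied to w' equals the transpose tableau T' (of shape λ', the conjugate of λ). -/
namespace RSKAux
open RSKPaper

lemma findIdx?_none' {p : ℕ → Bool} (r : List ℕ) (h : ∀ x ∈ r, p x = false) (i : ℕ) :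
    r.findIdx? p = none := by
  exact List.findIdx?_eq_none_iff.2 h

lemma findIdx?_last {p : ℕ → Bool} (s : List ℕ) (c : ℕ)
    (hs : ∀ x ∈ s, p x = false) (hc : p c = true) (i : ℕ) :
    (s ++ [c]).findIdx? p = some s.length := by
  simp [List.findIdx?_append, List.findIdx?_eq_none_iff.2 hs, hc]

lemma insert_cascade : ∀ (cs : List ℕ) (P : List (List ℕ)) (b : ℕ),
    (b :: cs).Pairwise (· < ·) →
    (∀ t, t < cs.length + 1 → ∀ x ∈ P.getD t [], x < (b :: cs).getD t 0) →
    insertTab (List.zipWith (fun r x => r ++ [x]) P cs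
        ++ (cs.drop P.length).map (fun x => [x]) ++ P.drop cs.length) b
    = List.zipWith (fun r x => r ++ [x]) P (b :: cs)
        ++ ((b :: cs).drop P.length).map (fun x => [x]) ++ P.drop (cs.length + 1) := by
  intro cs
  induction cs with
  | nil =>
    intro P b _ hP
    match P with
    | [] => rfl
    | p :: P' =>
      have hp : ∀ x ∈ p, (fun y => decide (b < y)) x = false := by
        intro x hx
        have := hP 0 (by simp) x (by simpa using hx)
        simp at this ⊢; omega
      simp only [List.zipWith_nil_right, List.nil_append, List.drop_zero, List.drop_nil,
        List.map_nil, List.append_nil, List.drop_length]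
      show insertTab (p :: P') b = _
      rw [insertTab, findIdx?_none' p hp 0]
      simp
  | cons c cs' ih =>
    intro P b hsort hP
    have hbc : b < c := (List.pairwise_cons.1 hsort).1 c (List.mem_cons_self (a := c) (l := cs'))
    have htail : (c :: cs').Pairwise (· < ·) := (List.pairwise_cons.1 hsort).2
    match P with
    | [] =>
      simp only [List.zipWith_nil_left, List.nil_append, List.length_nil, List.drop_zero,
        List.drop_nil, List.append_nil, List.map_cons]
      rw [insertTab]
      rw [show ([c].findIdx? (fun y => decide (b < y))) = some 0 by
        rw [List.findIdx?_cons]; simp [hbc]]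
      have := ih [] c htail (by intro t _ x hx; simp at hx)
      simp only [List.zipWith_nil_left, List.nil_append, List.length_nil, List.drop_zero,
        List.drop_nil, List.append_nil, List.map_cons] at this
      simp [this]
    | p :: P' =>
      have hp : ∀ x ∈ p, (fun y => decide (b < y)) x = false := by
        intro x hx
        have := hP 0 (by simp) x (by simpa using hx)
        simp at this ⊢; omega
      have hfi : ((p ++ [c]).findIdx? (fun y => decide (b < y))) = some p.length := by
        have := findIdx?_last p c hp (by simp [hbc]) 0
        simpa using this
      have hset : (p ++ [c]).set p.length b = p ++ [b] := by
        rw [List.set_append]; simp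
      have hgd : (p ++ [c]).getD p.length 0 = c := by
        rw [List.getD_append_right _ _ _ _ (le_refl _)]; simp
      have hP' : ∀ t, t < cs'.length + 1 → ∀ x ∈ P'.getD t [], x < (c :: cs').getD t 0 := by
        intro t ht x hx
        have := hP (t+1) (by simpa using ht) x (by simpa using hx)
        simpa using this
      have key := ih P' c htail hP'
      show insertTab ((p ++ [c]) :: (List.zipWith (fun r x => r ++ [x]) P' cs'
          ++ (cs'.drop P'.length).map (fun x => [x]) ++ P'.drop cs'.length)) b = _
      rw [insertTab, hfi]
      dsimp only
      rw [hset, hgd, key]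
      simp


def insSeq (bs : List ℕ) (P : List (List ℕ)) : List (List ℕ) :=
  bs.foldr (fun a Q => insertTab Q a) P

lemma insSeq_eq (bs : List ℕ) (P : List (List ℕ)) (hbs : bs.Pairwise (· < ·))
    (hP : ∀ t, t < bs.length → ∀ x ∈ P.getD t [], x < bs.getD t 0) :
    insSeq bs P = List.zipWith (fun r x => r ++ [x]) P bs
      ++ (bs.drop P.length).map (fun x => [x]) ++ P.drop bs.length := by
  induction bs with
  | nil => simp [insSeq]
  | cons b cs ih =>
    have hcs : cs.Pairwise (· < ·) := (List.pairwise_cons.1 hbs).2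
    have hPcs : ∀ t, t < cs.length → ∀ x ∈ P.getD t [], x < cs.getD t 0 := by
      intro t ht x hx
      have h1 : x < (b :: cs).getD t 0 := hP t (by simp; omega) x hx
      have h2 : (b :: cs).getD t 0 < cs.getD t 0 := by
        have e1 : (b :: cs).getD t 0 = (b :: cs)[t]'(by simp; omega) :=
          List.getD_eq_getElem _ _ _
        have e2 : cs.getD t 0 = cs[t]'ht := List.getD_eq_getElem _ _ _
        rw [e1, e2]
        have := List.pairwise_iff_getElem.1 hbs t (t+1) (by simp; omega) (by simp; omega)
          (by omega)
        simpa using this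
      omega
    have : insSeq (b :: cs) P = insertTab (insSeq cs P) b := rfl
    rw [this, ih hcs hPcs, insert_cascade cs P b hbs (by simpa using hP)]
    rfl

lemma RSKaux_fst : ∀ (w : List ℕ) (k : ℕ) (P Q : List (List ℕ)),
    (RSKaux w k (P, Q)).1 = w.foldl insertTab P := by
  intro w
  induction w with
  | nil => intro k P Q; rfl
  | cons a rest ih => intro k P Q; rw [RSKaux]; exact ih _ _ _

lemma lengths_dec (T : List (List ℕ)) (hT : IsSYT T) :
    ∀ s i, s ≤ i → i < T.length → (T.getD i []).length ≤ (T.getD s []).length := by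
  intro s i hsi hi
  rcases eq_or_lt_of_le hsi with h | h
  · subst h; exact le_refl _
  · rw [List.getD_eq_getElem _ _ hi, List.getD_eq_getElem _ _ (lt_trans h hi)]
    have h2 : i < (shape T).length := by simpa [shape] using hi
    have h1 : s < (shape T).length := by simp [shape]; omega
    have hpw := List.pairwise_iff_getElem.1 hT.1.1 s i h1 h2 h
    simpa [shape] using hpw

lemma col_lt (T : List (List ℕ)) (hT : IsSYT T) :
    ∀ i, i < T.length → ∀ s, s < i → ∀ t, t < (T.getD i []).length →
    (T.getD s []).getD t 0 < (T.getD i []).getD t 0 := by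
  intro i
  induction i with
  | zero => omega
  | succ i ih =>
    intro hi1 s hs t ht
    have hadj := hT.2.2.1 i t hi1 ht
    rcases Nat.lt_or_ge s i with h | h
    · have hti : t < (T.getD i []).length :=
        lt_of_lt_of_le ht (lengths_dec T hT i (i+1) (by omega) hi1)
      exact lt_trans (ih (by omega) s h t hti) hadj
    · have : s = i := by omega
      subst this; exact hadj

lemma headD_take (T : List (List ℕ)) (i : ℕ) (hi : 1 ≤ i) :
    (T.take i).headD [] = T.headD [] := by
  cases T with
  | nil => simp
  | cons a t =>
    cases i with
    | zero => omega
    | succ j => rfl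

lemma headD_eq_getD (T : List (List ℕ)) : T.headD [] = T.getD 0 [] := by
  cases T <;> rfl

lemma headD_append (l l' : List (List ℕ)) (h : l ≠ []) :
    (l ++ l').headD [] = l.headD [] := by
  cases l with
  | nil => exact absurd rfl h
  | cons a t => rfl

lemma length_transposeTab (S : List (List ℕ)) :
    (transposeTab S).length = (S.headD []).length := by
  simp [transposeTab]

lemma getElem_transposeTab (S : List (List ℕ)) (j : ℕ) (hj : j < (transposeTab S).length) :
    (transposeTab S)[j] = S.filterMap (fun row => row[j]?) := by
  simp [transposeTab] at hj ⊢

lemma build (T : List (List ℕ)) (hT : IsSYT T) :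
    ∀ i, i ≤ T.length →
    (((T.take i).map List.reverse).flatten).foldl insertTab [] = transposeTab (T.take i) := by
  intro i
  induction i with
  | zero => intro _; rfl
  | succ i ih =>
    intro hi1
    have hi : i < T.length := hi1
    set bs := T.getD i [] with hbs_def
    have hstep : T.take (i+1) = T.take i ++ [bs] := by
      rw [hbs_def, List.getD_eq_getElem _ _ hi, List.take_succ, List.getElem?_eq_getElem hi]
      rfl
    rw [hstep, List.map_append, List.flatten_append, List.foldl_append, ih (le_of_lt hi)]
    simp only [List.map_cons, List.map_nil, List.flatten_cons, List.flatten_nil,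
      List.append_nil]
    rw [List.foldl_reverse]
    have hfold : (bs.foldr (fun x y => insertTab y x) (transposeTab (T.take i)))
        = insSeq bs (transposeTab (T.take i)) := rfl
    rw [hfold]
    have hmem : bs ∈ T := by
      rw [hbs_def, List.getD_eq_getElem _ _ hi]; exact List.getElem_mem _
    have hsorted : bs.Pairwise (· < ·) := hT.2.1 bs hmem
    have hP : ∀ t, t < bs.length →
        ∀ x ∈ (transposeTab (T.take i)).getD t [], x < bs.getD t 0 := by
      intro t ht x hx
      by_cases hK : t < (transposeTab (T.take i)).length
      · rw [List.getD_eq_getElem _ _ hK, getElem_transposeTab _ _ hK] at hx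
        obtain ⟨row, hrow, hget⟩ := List.mem_filterMap.1 hx
        obtain ⟨s, hs, hrow_eq⟩ := List.mem_iff_getElem.1 hrow
        have hs' : s < i := by
          have := hs; simp at this; omega
        obtain ⟨htr, hxval⟩ := List.getElem?_eq_some_iff.1 hget
        have hrowT : row = T.getD s [] := by
          rw [← hrow_eq, List.getElem_take,
            List.getD_eq_getElem _ _ (lt_trans hs' hi)]
        have hcl := col_lt T hT i hi s hs' t ht
        rw [← hbs_def] at hcl
        have : x = (T.getD s []).getD t 0 := by
          rw [← hxval, ← hrowT, List.getD_eq_getElem _ _ htr]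
        omega
      · rw [List.getD_eq_default _ _ (by omega)] at hx
        simp at hx
    rw [insSeq_eq bs _ hsorted hP]
    rcases Nat.eq_zero_or_pos i with hi0 | hi0
    · subst hi0
      have h0 : transposeTab (List.take 0 T) = [] := by simp [transposeTab]
      rw [h0]
      simp only [List.zipWith_nil_left, List.nil_append, List.length_nil, List.drop_zero,
        List.drop_nil, List.append_nil, List.take_zero]
      apply List.ext_getElem
      · simp [transposeTab]
      · intro j h1 h2
        have hj : j < bs.length := by simpa using h1
        simp [transposeTab, List.getElem?_eq_getElem hj]
    · -- i ≥ 1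
      have hne : T.take i ≠ [] :=
        List.ne_nil_of_length_pos (by rw [List.length_take]; omega)
      have hKval : ((T.take i).headD []).length = (T.getD 0 []).length := by
        rw [headD_take T i hi0, headD_eq_getD]
      have hPlen : (transposeTab (T.take i)).length = (T.getD 0 []).length := by
        rw [length_transposeTab, hKval]
      have hmK : bs.length ≤ (T.getD 0 []).length :=
        lengths_dec T hT 0 i (by omega) hi
      have hdropnil : bs.drop (transposeTab (T.take i)).length = [] :=
        List.drop_eq_nil_of_le (by omega)
      rw [hdropnil]
      simp only [List.map_nil, List.append_nil]
      have hRlen : (transposeTab (T.take i ++ [bs])).length = (T.getD 0 []).length := by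
        rw [length_transposeTab, headD_append _ _ hne]; exact hKval
      apply List.ext_getElem
      · simp only [List.length_append, List.length_zipWith, List.length_drop, hPlen, hRlen]
        omega
      · intro j h1 h2
        have hj : j < (T.getD 0 []).length := by rw [← hRlen]; exact h2
        rw [getElem_transposeTab _ _ h2, List.filterMap_append]
        have hPj : ∀ (h : j < (transposeTab (T.take i)).length),
            (transposeTab (T.take i))[j] = (T.take i).filterMap (fun row => row[j]?) :=
          fun h => getElem_transposeTab _ _ h
        rcases Nat.lt_or_ge j bs.length with hjm | hjm
        · have hzl : j < (List.zipWith (fun r x => r ++ [x])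
              (transposeTab (T.take i)) bs).length := by
            rw [List.length_zipWith, hPlen, lt_inf_iff]
            exact ⟨by omega, hjm⟩
          rw [List.getElem_append_left hzl, List.getElem_zipWith,
            hPj (by rw [hPlen]; omega)]
          have : ([bs].filterMap (fun row => row[j]?)) = [bs[j]] := by
            simp [List.getElem?_eq_getElem hjm]
          rw [this]
        · have hzl : (List.zipWith (fun r x => r ++ [x])
              (transposeTab (T.take i)) bs).length = bs.length := by
            rw [List.length_zipWith, hPlen]
            exact inf_eq_right.2 (by omega)
          rw [List.getElem_append_right (by rw [hzl]; exact hjm), List.getElem_drop,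
            getElem_transposeTab _ _ (by rw [hzl, hPlen]; omega)]
          rw [show bs.length + (j - (List.zipWith (fun r x => r ++ [x])
              (transposeTab (T.take i)) bs).length) = j from by rw [hzl]; omega]
          have : ([bs].filterMap (fun row => row[j]?)) = [] := by
            simp [List.getElem?_eq_none (by omega : bs.length ≤ j)]
          rw [this, List.append_nil]

end RSKAux

open RSKPaper in
/-- Inserting the reversed row reading word of a standard Young tableau `T`
yields the transposed tableau `T'` as insertion tableau. -/
theorem insert_reversed_readingWord (T : List (List ℕ)) (lam : List ℕ)
    (hT : IsSYT T) (hshape : shape T = lam) :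
    (RSK (readingWord T).reverse).1 = transposeTab T := by
  have hw : (readingWord T).reverse = (T.map List.reverse).flatten := by
    rw [readingWord, List.reverse_flatten]
    congr 1
    rw [List.map_reverse, List.reverse_reverse]
  have hb := RSKAux.build T hT T.length le_rfl
  rw [List.take_length] at hb
  rw [RSK, RSKAux.RSKaux_fst, hw]
  exact hb
end

section
/- Let T be a standard Young tableau of shape λ' with row reading word w, and let w' be the reversal of w. Then the recording tableau of RSK applied to w' equals Q_λ, the tableau of shape λ whose columns are filled consecutively with 1,2,...,n from bottom to top, left to right. In particular, the recording tableau depends only on the shape λ'. -/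
namespace RSKPaper

/-- Append entries of `R` entrywise to the ends of the rows of `P`. -/
def colAppend : List (List ℕ) → List ℕ → List (List ℕ)
  | P, [] => P
  | [], a :: R => [a] :: colAppend [] R
  | q :: P, a :: R => (q ++ [a]) :: colAppend P R

lemma colAppend_nil (P : List (List ℕ)) : colAppend P [] = P := by
  cases P <;> simp [colAppend]

lemma length_colAppend (R : List ℕ) (P : List (List ℕ)) :
    (colAppend P R).length = max P.length R.length := by
  induction R generalizing P with
  | nil => simp [colAppend_nil]
  | cons a R ih =>
    cases P with
    | nil => simp [colAppend, ih]
    | cons q P => simp [colAppend, ih]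

lemma colAppend_getD_lt (R : List ℕ) (P : List (List ℕ)) (i : ℕ) (h : i < R.length) :
    (colAppend P R).getD i [] = P.getD i [] ++ [R.getD i 0] := by
  induction R generalizing P i with
  | nil => simp at h
  | cons a R ih =>
    cases P with
    | nil =>
      cases i with
      | zero => simp [colAppend]
      | succ i => simpa [colAppend] using ih [] i (by simpa using h)
    | cons q P =>
      cases i with
      | zero => simp [colAppend]
      | succ i => simpa [colAppend] using ih P i (by simpa using h)

lemma colAppend_getD_ge (R : List ℕ) (P : List (List ℕ)) (i : ℕ) (h : R.length ≤ i) :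
    (colAppend P R).getD i [] = P.getD i [] := by
  induction R generalizing P i with
  | nil => simp [colAppend_nil]
  | cons a R ih =>
    cases i with
    | zero => simp at h
    | succ i =>
      cases P with
      | nil => simpa [colAppend] using ih [] i (by simpa using h)
      | cons q P => simpa [colAppend] using ih P i (by simpa using h)

lemma findIdx?_concat_of_all_lt {a s : ℕ} {q : List ℕ} (hq : ∀ b ∈ q, b < a) (has : a < s) :
    (q ++ [s]).findIdx? (fun b => decide (a < b)) = some q.length := by
  rw [List.findIdx?_append]
  have h1 : q.findIdx? (fun b => decide (a < b)) = none := by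
    rw [List.findIdx?_eq_none_iff]
    intro x hx
    simpa using Nat.not_lt.mpr (le_of_lt (hq x hx))
  have h2 : ([s] : List ℕ).findIdx? (fun b => decide (a < b)) = some 0 := by
    simp [List.findIdx?_cons, has]
  simp [h1, h2]

lemma set_concat_len {a s : ℕ} (q : List ℕ) : (q ++ [s]).set q.length a = q ++ [a] := by
  rw [List.set_append]
  simp

lemma getD_concat_len {s : ℕ} (q : List ℕ) : (q ++ [s]).getD q.length 0 = s := by
  rw [List.getD_eq_getElem?_getD, List.getElem?_append_right (le_refl _)]
  simp

lemma cascade_s16 : ∀ (S : List ℕ) (P : List (List ℕ)) (a : ℕ),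
    (a :: S).Pairwise (· < ·) →
    (∀ i, i ≤ S.length → ∀ b ∈ P.getD i [], b < (a :: S).getD i 0) →
    insertTab (colAppend P S) a = colAppend P (a :: S) := by
  intro S
  induction S with
  | nil =>
    intro P a _ hdom
    rw [colAppend_nil]
    cases P with
    | nil => rfl
    | cons q P =>
      have hq : ∀ b ∈ q, b < a := by simpa using hdom 0 (le_refl _)
      have : q.findIdx? (fun b => decide (a < b)) = none := by
        rw [List.findIdx?_eq_none_iff]
        intro x hx
        simpa using Nat.not_lt.mpr (le_of_lt (hq x hx))
      simp [insertTab, this, colAppend]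
  | cons s S ih =>
    intro P a hsort hdom
    have has : a < s := (List.pairwise_cons.mp hsort).1 s (by simp)
    cases P with
    | nil =>
      have : insertTab ([s] :: colAppend [] S) a = [a] :: insertTab (colAppend [] S) s := by
        simp [insertTab, has]
      rw [show colAppend ([] : List (List ℕ)) (s :: S) = [s] :: colAppend [] S from rfl, this,
        ih [] s (List.pairwise_cons.mp hsort).2 (by intro i _ b hb; simp at hb)]
      rfl
    | cons q P =>
      have hq : ∀ b ∈ q, b < a := by simpa using hdom 0 (by simp)
      have hfi := findIdx?_concat_of_all_lt hq has
      have : insertTab ((q ++ [s]) :: colAppend P S) a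
          = (q ++ [a]) :: insertTab (colAppend P S) s := by
        simp [insertTab, hfi, set_concat_len, getD_concat_len]
      rw [show colAppend (q :: P) (s :: S) = (q ++ [s]) :: colAppend P S from rfl, this,
        ih P s (List.pairwise_cons.mp hsort).2 (by
          intro i hi b hb
          exact hdom (i + 1) (by simpa using hi) b hb)]
      rfl
lemma growth_eq (P : List (List ℕ)) (S : List ℕ) (a : ℕ) :
    growthRow (colAppend P S) (colAppend P (a :: S)) = S.length := by
  unfold growthRow
  have hlen : S.length < (colAppend P (a :: S)).length := by
    rw [length_colAppend]; simp only [List.length_cons]; omega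
  rw [List.findIdx_eq (by simpa using hlen)]
  refine ⟨?_, ?_⟩
  · simp only [List.getElem_range]
    rw [colAppend_getD_ge S P _ (le_refl _), colAppend_getD_lt (a :: S) P _ (by simp)]
    simp
  · intro j hj
    simp only [List.getElem_range]
    rw [colAppend_getD_lt S P _ hj, colAppend_getD_lt (a :: S) P _ (by simp; omega)]
    simp

lemma addBox_cons (x : List ℕ) (xs : List (List ℕ)) (i k : ℕ) :
    addBox (x :: xs) (i + 1) k = x :: addBox xs i k := by
  unfold addBox
  by_cases h : i < xs.length
  · rw [if_pos (by simpa using Nat.succ_lt_succ h), if_pos h]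
    simp
  · rw [if_neg (by simpa using fun hh => h (Nat.lt_of_succ_lt_succ hh)), if_neg h]
    simp

lemma addBox_colAppend (L : List ℕ) (Q : List (List ℕ)) (k : ℕ) :
    addBox (colAppend Q L) L.length k = colAppend Q (L ++ [k]) := by
  induction L generalizing Q with
  | nil =>
    rw [colAppend_nil]
    cases Q with
    | nil => rfl
    | cons q Q => simp [addBox, colAppend]
  | cons a L ih =>
    cases Q with
    | nil =>
      show addBox ([a] :: colAppend [] L) (L.length + 1) k = [a] :: colAppend [] (L ++ [k])
      rw [addBox_cons, ih]
    | cons q Q =>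
      show addBox ((q ++ [a]) :: colAppend Q L) (L.length + 1) k
          = (q ++ [a]) :: colAppend Q (L ++ [k])
      rw [addBox_cons, ih]
lemma sorted_getD_le {X : List ℕ} (h : X.Pairwise (· < ·)) {i j : ℕ} (hij : i ≤ j)
    (hj : j < X.length) : X.getD i 0 ≤ X.getD j 0 := by
  rcases Nat.lt_or_ge i j with hlt | hge
  · have hi : i < X.length := lt_of_le_of_lt hij hj
    have := List.Pairwise.rel_get_of_lt h (a := ⟨i, hi⟩) (b := ⟨j, hj⟩) hlt
    rw [List.getD_eq_getElem _ _ hi, List.getD_eq_getElem _ _ hj]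
    simpa using le_of_lt this
  · have : i = j := le_antisymm hij hge
    subst this; rfl

lemma getD_append_add {α : Type*} (l l' : List α) (i : ℕ) (d : α) :
    (l ++ l').getD (l.length + i) d = l'.getD i d := by
  rw [List.getD_eq_getElem?_getD, List.getElem?_append_right (Nat.le_add_right _ _),
    Nat.add_sub_cancel_left, List.getD_eq_getElem?_getD]

lemma blockAux : ∀ (W S L : List ℕ) (P Q : List (List ℕ)) (k : ℕ),
    L.length = S.length →
    (W.reverse ++ S).Pairwise (· < ·) →
    (∀ i, i < W.length + S.length → ∀ b ∈ P.getD i [], b < (W.reverse ++ S).getD i 0) →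
    RSKaux W k (colAppend P S, colAppend Q L) =
      (colAppend P (W.reverse ++ S), colAppend Q (L ++ List.range' k W.length)) := by
  intro W
  induction W with
  | nil =>
    intro S L P Q k hL hsort hdom
    simp [RSKaux]
  | cons a W ih =>
    intro S L P Q k hL hsort hdom
    have hre : (a :: W).reverse ++ S = W.reverse ++ (a :: S) := by simp
    rw [hre] at hsort hdom
    have hsort' : (a :: S).Pairwise (· < ·) :=
      hsort.sublist (List.sublist_append_right _ _)
    have hcas : insertTab (colAppend P S) a = colAppend P (a :: S) := by
      apply cascade_s16 S P a hsort'
      intro i hi b hb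
      have h1 : b < (W.reverse ++ (a :: S)).getD i 0 := by
        apply hdom i ?_ b hb
        simp only [List.length_cons]
        omega
      have h3 : (W.reverse ++ (a :: S)).getD (W.reverse.length + i) 0 = (a :: S).getD i 0 :=
        getD_append_add _ _ _ _
      have h2 : (W.reverse ++ (a :: S)).getD i 0
          ≤ (W.reverse ++ (a :: S)).getD (W.reverse.length + i) 0 := by
        apply sorted_getD_le hsort (Nat.le_add_left _ _)
        simp only [List.length_append, List.length_cons, List.length_reverse]
        omega
      omega
    have step : RSKaux (a :: W) k (colAppend P S, colAppend Q L)
        = RSKaux W (k + 1) (colAppend P (a :: S), colAppend Q (L ++ [k])) := by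
      show RSKaux W (k+1) _ = _
      rw [hcas, growth_eq, ← hL, addBox_colAppend]
    rw [step, ih (a :: S) (L ++ [k]) P Q (k + 1) (by simp [hL]) hsort ?_]
    · rw [hre]
      congr 1
      rw [List.length_cons, List.range'_succ, List.append_assoc]
      rfl
    · intro i hi b hb
      apply hdom i ?_ b hb
      simp only [List.length_cons] at hi ⊢
      omega
lemma RSKaux_append (u v : List ℕ) : ∀ (k : ℕ) (pq : List (List ℕ) × List (List ℕ)),
    RSKaux (u ++ v) k pq = RSKaux v (k + u.length) (RSKaux u k pq) := by
  induction u with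
  | nil => intro k pq; simp [RSKaux]
  | cons a u ih =>
    intro k pq
    obtain ⟨P, Q⟩ := pq
    show RSKaux (u ++ v) (k+1) _ = RSKaux v (k + (u.length + 1)) (RSKaux u (k+1) _)
    rw [ih]
    congr 1
    omega

def lblocks : ℕ → List (List ℕ) → List (List ℕ)
  | _, [] => []
  | k, R :: Ts => List.range' k R.length :: lblocks (k + R.length) Ts

lemma chainTab (Ts : List (List ℕ))
    (hlen : ∀ j, j + 1 < Ts.length → (Ts.getD (j+1) []).length ≤ (Ts.getD j []).length)
    (hcol : ∀ j, j + 1 < Ts.length → ∀ i < (Ts.getD (j+1) []).length,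
        (Ts.getD j []).getD i 0 < (Ts.getD (j+1) []).getD i 0) :
    ∀ d j, j + d < Ts.length → ∀ i < (Ts.getD (j+d) []).length,
      i < (Ts.getD j []).length ∧
      (0 < d → (Ts.getD j []).getD i 0 < (Ts.getD (j+d) []).getD i 0) := by
  intro d
  induction d with
  | zero => intro j h i hi; exact ⟨hi, fun h => absurd h (lt_irrefl 0)⟩
  | succ d ihd =>
    intro j h i hi
    have hji : j + (d+1) = (j+d) + 1 := rfl
    rw [hji] at hi h
    have h1 : i < (Ts.getD (j+d) []).length := lt_of_lt_of_le hi (hlen (j+d) h)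
    obtain ⟨h2, h3⟩ := ihd j (by omega) i h1
    refine ⟨h2, fun _ => ?_⟩
    have h4 := hcol (j+d) h i hi
    rcases Nat.eq_zero_or_pos d with rfl | hd
    · simpa using h4
    · have := h3 hd
      rw [hji]
      omega

lemma outerRSK : ∀ (Ts : List (List ℕ)) (P Q : List (List ℕ)) (k : ℕ),
    (∀ R ∈ Ts, R.Pairwise (· < ·)) →
    (∀ j, j + 1 < Ts.length → (Ts.getD (j+1) []).length ≤ (Ts.getD j []).length) →
    (∀ j, j + 1 < Ts.length → ∀ i < (Ts.getD (j+1) []).length,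
        (Ts.getD j []).getD i 0 < (Ts.getD (j+1) []).getD i 0) →
    (∀ j, j < Ts.length → ∀ i < (Ts.getD j []).length,
        ∀ b ∈ P.getD i [], b < (Ts.getD j []).getD i 0) →
    RSKaux ((Ts.map List.reverse).flatten) k (P, Q) =
      (Ts.foldl colAppend P, (lblocks k Ts).foldl colAppend Q) := by
  intro Ts
  induction Ts with
  | nil => intro P Q k _ _ _ _; simp [RSKaux, lblocks]
  | cons R Ts ih =>
    intro P Q k hsort hlen hcol hdom
    have hflat : ((R :: Ts).map List.reverse).flatten
        = R.reverse ++ (Ts.map List.reverse).flatten := by simp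
    rw [hflat, RSKaux_append]
    have hblock : RSKaux R.reverse k (P, Q)
        = (colAppend P R, colAppend Q (List.range' k R.length)) := by
      have hb := blockAux R.reverse [] [] P Q k rfl
        (by simpa using hsort R (by simp))
        (by
          intro i hi b hb
          simp only [List.reverse_reverse, List.append_nil]
          exact hdom 0 (by simp) i (by simpa using hi) b hb)
      simpa [colAppend_nil] using hb
    rw [hblock]
    have hrevlen : R.reverse.length = R.length := by simp
    rw [hrevlen]
    rw [ih (colAppend P R) (colAppend Q (List.range' k R.length)) (k + R.length)
      (fun r hr => hsort r (by simp [hr]))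
      (fun j hj => hlen (j+1) (by simpa using Nat.succ_lt_succ hj))
      (fun j hj => hcol (j+1) (by simpa using Nat.succ_lt_succ hj))
      ?_]
    · rfl
    · intro j hj i hi b hb
      have hchain := chainTab (R :: Ts) hlen hcol (j+1) 0
        (by simpa using Nat.succ_lt_succ hj) i (by simpa using hi)
      obtain ⟨hiR, hval⟩ := hchain
      simp only [List.getD_cons_zero] at hiR hval
      rw [colAppend_getD_lt R P i hiR] at hb
      rcases List.mem_append.mp hb with hb1 | hb2
      · exact hdom (j+1) (by simpa using Nat.succ_lt_succ hj) i (by simpa using hi) b hb1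
      · have : b = R.getD i 0 := by simpa using hb2
        subst this
        simpa using hval (by omega)
lemma foldl_colAppend_getD : ∀ (cols : List (List ℕ)) (P : List (List ℕ)) (i : ℕ),
    (cols.foldl colAppend P).getD i [] = P.getD i [] ++ cols.filterMap (fun c => (c)[i]?) := by
  intro cols
  induction cols with
  | nil => intro P i; simp
  | cons c cols ih =>
    intro P i
    show (cols.foldl colAppend (colAppend P c)).getD i [] = _
    rw [ih]
    by_cases h : i < c.length
    · have hg : (c)[i]? = some (c.getD i 0) := by
        rw [List.getElem?_eq_getElem h, List.getD_eq_getElem _ _ h]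
      rw [colAppend_getD_lt c P i h, List.filterMap_cons, hg]
      simp
    · have hg : (c)[i]? = none := by
        rw [List.getElem?_eq_none (by omega)]
      rw [colAppend_getD_ge c P i (by omega), List.filterMap_cons, hg]

lemma foldl_colAppend_length_le : ∀ (cols : List (List ℕ)) (P : List (List ℕ)) (n : ℕ),
    P.length ≤ n → (∀ c ∈ cols, c.length ≤ n) → (cols.foldl colAppend P).length ≤ n := by
  intro cols
  induction cols with
  | nil => intro P n h _; simpa using h
  | cons c cols ih =>
    intro P n hP hc
    refine ih (colAppend P c) n ?_ (fun d hd => hc d (by simp [hd]))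
    rw [length_colAppend]
    exact max_le hP (hc c (by simp))

lemma foldl_colAppend_length_ge : ∀ (cols : List (List ℕ)) (P : List (List ℕ)),
    P.length ≤ (cols.foldl colAppend P).length := by
  intro cols
  induction cols with
  | nil => intro P; simp
  | cons c cols ih =>
    intro P
    refine le_trans ?_ (ih (colAppend P c))
    rw [length_colAppend]
    exact le_max_left _ _

lemma lblocks_eq : ∀ (Ts : List (List ℕ)) (k : ℕ),
    lblocks k Ts = (List.range Ts.length).map
      (fun j => List.range' (k + ((Ts.take j).map List.length).sum) (Ts.getD j []).length) := by
  intro Ts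
  induction Ts with
  | nil => intro k; simp [lblocks]
  | cons R Ts ih =>
    intro k
    rw [show (R :: Ts).length = Ts.length + 1 from rfl, List.range_succ_eq_map,
      List.map_cons, List.map_map]
    show List.range' k R.length :: lblocks (k + R.length) Ts = _
    have h2 : lblocks (k + R.length) Ts = List.map
        ((fun j => List.range' (k + (((R :: Ts).take j).map List.length).sum)
          ((R :: Ts).getD j []).length) ∘ Nat.succ) (List.range Ts.length) := by
      rw [ih]
      apply List.map_congr_left
      intro j hj
      show List.range' (k + R.length + ((Ts.take j).map List.length).sum) (Ts.getD j []).length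
        = List.range' (k + (((R :: Ts).take (j+1)).map List.length).sum)
            ((R :: Ts).getD (j+1) []).length
      rw [List.take_succ_cons, List.map_cons, List.sum_cons, List.getD_cons_succ,
        ← Nat.add_assoc]
    rw [h2]
    congr 1

lemma range'_map_aux (s m : ℕ) :
    (List.range m).map (fun i => s + i + 1) = List.range' (s+1) m := by
  have h1 : (List.range m).map (fun i => s + i + 1)
      = (List.range' 0 m).map (fun x => (s+1) + x) := by
    rw [List.range_eq_range']
    apply List.map_congr_left
    intro i _
    omega
  rw [h1, List.map_add_range']
lemma mem_foldl_colAppend_length_le : ∀ (cols : List (List ℕ)) (P : List (List ℕ))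
    (c : List ℕ), c ∈ cols → c.length ≤ (cols.foldl colAppend P).length := by
  intro cols
  induction cols with
  | nil => intro P c hc; simp at hc
  | cons c0 cols ih =>
    intro P c hc
    rcases List.mem_cons.mp hc with rfl | hc'
    · refine le_trans ?_ (foldl_colAppend_length_ge cols (colAppend P c))
      rw [length_colAppend]
      exact le_max_right _ _
    · exact ih (colAppend P c0) c hc'

lemma foldl_eq_rowsOfCols (cols : List (List ℕ)) (K : ℕ)
    (hlen : (cols.foldl colAppend []).length = K) :
    cols.foldl colAppend [] = rowsOfCols cols K := by
  apply List.ext_getElem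
  · simpa [rowsOfCols] using hlen
  · intro i h1 h2
    have hiK : i < K := by simpa [rowsOfCols] using h2
    rw [← List.getD_eq_getElem _ [] h1, foldl_colAppend_getD]
    simp [rowsOfCols]
end RSKPaper

open RSKPaper in
/-- The recording tableau of the reversed row reading word of a standard Young
tableau of shape `λ'` is `Q_λ`; in particular it depends only on the shape. -/
theorem recording_of_reversed_readingWord (T : List (List ℕ)) (lam : List ℕ)
    (hT : IsSYT T) (hshape : shape T = conj lam) (hlam : IsPartitionList lam) :
    (RSK (readingWord T).reverse).2 = Qlam lam := by
  obtain ⟨⟨hsh_sorted, hsh_pos⟩, hrows, hcols, -⟩ := hT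
  have hmapT : T.map List.length = conj lam := hshape
  have hw : (readingWord T).reverse = (T.map List.reverse).flatten := by
    rw [readingWord, List.flatten_reverse, List.reverse_reverse]
  have hlen : ∀ j, j + 1 < T.length → (T.getD (j+1) []).length ≤ (T.getD j []).length := by
    intro j hj
    have hj' : j < T.length := by omega
    have hjs : j < (shape T).length := by simpa [shape] using hj'
    have hjs1 : j + 1 < (shape T).length := by simpa [shape] using hj
    have hlt : (⟨j, hjs⟩ : Fin (shape T).length) < ⟨j+1, hjs1⟩ := by
      simp [Fin.mk_lt_mk]
    have hp := hsh_sorted.rel_get_of_lt hlt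
    simp only [shape, List.get_eq_getElem, List.getElem_map, ge_iff_le] at hp
    rw [List.getD_eq_getElem _ _ hj', List.getD_eq_getElem _ _ hj]
    exact hp
  have hmain := outerRSK T [] [] 1 hrows hlen
    (fun j hj i hi => hcols j i hj hi)
    (by intro j hj i hi b hb; simp at hb)
  have hQ : (RSK (readingWord T).reverse).2 = (lblocks 1 T).foldl colAppend [] := by
    rw [RSK, hw, hmain]
  rw [hQ]
  rcases eq_or_ne lam [] with rfl | hne
  · have hT0 : T = [] := by
      have h0 : T.map List.length = [] := by simpa [conj] using hmapT
      simpa using h0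
    rw [hT0]
    simp [lblocks, Qlam, conj, rowsOfCols]
  · obtain ⟨a, lam', rfl⟩ : ∃ a lam', lam = a :: lam' := by
      cases lam with
      | nil => exact absurd rfl hne
      | cons a lam' => exact ⟨a, lam', rfl⟩
    set lam := a :: lam' with hlamdef
    have hha : 0 < a := hlam.2 a (by simp [hlamdef])
    have hclen : (conj lam).length = a := by simp [conj, hlamdef]
    have hTlen : T.length = (conj lam).length := by
      have := congrArg List.length hmapT
      simpa using this
    have hc0 : (conj lam).getD 0 0 = lam.length := by
      rw [List.getD_eq_getElem _ _ (by omega : 0 < (conj lam).length)]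
      simp only [conj, List.getElem_map, List.getElem_range]
      rw [List.countP_eq_length.mpr]
      intro x hx
      simpa using hlam.2 x hx
    have hconj_le : ∀ j, (conj lam).getD j 0 ≤ lam.length := by
      intro j
      by_cases hj : j < (conj lam).length
      · rw [List.getD_eq_getElem _ _ hj]
        simp only [conj, List.getElem_map, List.getElem_range]
        exact List.countP_le_length
      · rw [List.getD_eq_default _ _ (by omega)]
        exact Nat.zero_le _
    have hA : lblocks 1 T = (List.range (conj lam).length).map
        (fun j => (List.range ((conj lam).getD j 0)).map
          (fun i => ((conj lam).take j).sum + i + 1)) := by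
      rw [lblocks_eq, hTlen]
      apply List.map_congr_left
      intro j hj
      have hjT : j < T.length := by
        have := List.mem_range.mp hj
        omega
      have e1 : (T.getD j []).length = (conj lam).getD j 0 := by
        rw [← hmapT]
        exact (List.getD_map T [] List.length).symm
      have e2 : ((T.take j).map List.length).sum = ((conj lam).take j).sum := by
        rw [List.map_take, hmapT]
      rw [e1, e2, range'_map_aux, Nat.add_comm]
    rw [hA]
    set Qcols := (List.range (conj lam).length).map
      (fun j => (List.range ((conj lam).getD j 0)).map
        (fun i => ((conj lam).take j).sum + i + 1)) with hQc
    have hmemlen : ∀ c ∈ Qcols, c.length ≤ lam.length := by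
      intro c hc
      rw [hQc] at hc
      obtain ⟨j, hj, rfl⟩ := List.mem_map.mp hc
      simpa using hconj_le j
    have hup : (Qcols.foldl colAppend []).length ≤ lam.length :=
      foldl_colAppend_length_le Qcols [] lam.length (by simp) hmemlen
    have hc0mem : (List.range ((conj lam).getD 0 0)).map
        (fun i => ((conj lam).take 0).sum + i + 1) ∈ Qcols := by
      rw [hQc]
      exact List.mem_map.mpr ⟨0, List.mem_range.mpr (by omega), rfl⟩
    have hlow : lam.length ≤ (Qcols.foldl colAppend []).length := by
      have h5 := mem_foldl_colAppend_length_le Qcols [] _ hc0mem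
      rw [List.length_map, List.length_range, hc0] at h5
      exact h5
    rw [foldl_eq_rowsOfCols Qcols lam.length (le_antisymm hup hlow)]
    rfl
end
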